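/- Let q >= 1 and epsilon > 0. For any random-cluster measure phi^xi_{G,p,q} on a finite graph G with p in [epsilon, 1 - epsilon] and any increasing event A, one has d/dp phi^xi_{G,p,q}(A) asymp sum over edges e in E of I^p_A(e), where the implicit constants depend only on q and epsilon. -/

import Mathlib

open scoped BigOperators

/-- Vertices of the square lattice `ℤ²`. -/
abbrev Vtx : Type := ℤ × ℤ

/-- Edges of the square lattice: unordered pairs of vertices. -/
abbrev Edge : Type := Sym2 Vtx

/-- Two vertices of `ℤ²` are adjacent when they are at euclidean distance 1. -/
def adjV (x y : Vtx) : Prop := |x.1 - y.1| + |x.2 - y.2| = 1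

instance (x y : Vtx) : Decidable (adjV x y) := by unfold adjV; infer_instance

/-- The set of lattice edges joining two vertices of `V` (the edge set of the subgraph of `ℤ²`
induced by `V`). -/
def edgeFinset (V : Finset Vtx) : Finset Edge :=
  ((V ×ˢ V).filter (fun xy => adjV xy.1 xy.2)).image (fun xy => s(xy.1, xy.2))

/-- Extend a configuration defined on the edges of a finite graph to all lattice edges,
declaring all other edges closed. -/
def extendConfig (E : Finset Edge) (ω : {e // e ∈ E} → Bool) : Edge → Bool :=
  fun e => if h : e ∈ E then ω ⟨e, h⟩ else false

/-- One connectivity step for the random-cluster model on the graph induced by `V`,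
with boundary condition (wiring relation) `ξ`: either an open edge of the graph,
or a wiring of the boundary condition. -/
def rcStep (V : Finset Vtx) (ξ : Vtx → Vtx → Prop) (ω : Edge → Bool) (x y : Vtx) : Prop :=
  (x ∈ V ∧ y ∈ V ∧ adjV x y ∧ ω s(x, y) = true) ∨ ξ x y

/-- The number `k(ω, ξ)` of connected components of the configuration `ω` on the graph induced
by `V`, where boundary vertices are additionally wired according to `ξ`. -/
noncomputable def clusterCount (V : Finset Vtx) (ξ : Vtx → Vtx → Prop) (ω : Edge → Bool) : ℕ :=
  Set.ncard {C : Set Vtx | ∃ x ∈ V, C = {y | y ∈ V ∧ Relation.ReflTransGen (rcStep V ξ ω) x y}}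

/-- The random-cluster weight `p^{#open} (1-p)^{#closed} q^{k(ω,ξ)}` of a configuration on the
graph induced by `V`. -/
noncomputable def rcWeight (V : Finset Vtx) (ξ : Vtx → Vtx → Prop) (p q : ℝ)
    (ω : {e // e ∈ edgeFinset V} → Bool) : ℝ :=
  p ^ (Finset.univ.filter (fun e => ω e = true)).card *
    (1 - p) ^ (Finset.univ.filter (fun e => ω e = false)).card *
    q ^ clusterCount V ξ (extendConfig (edgeFinset V) ω)

open Classical in
/-- The probability of the event `A` under the random-cluster measure `φ^ξ_{V,p,q}` on the
graph induced by `V`, with boundary condition `ξ`.  Events are read on the configuration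
extended (by closed edges) to the whole lattice. -/
noncomputable def rcProb (V : Finset Vtx) (ξ : Vtx → Vtx → Prop) (p q : ℝ)
    (A : (Edge → Bool) → Prop) : ℝ :=
  (∑ ω : {e // e ∈ edgeFinset V} → Bool,
      if A (extendConfig (edgeFinset V) ω) then rcWeight V ξ p q ω else 0) /
    ∑ ω : {e // e ∈ edgeFinset V} → Bool, rcWeight V ξ p q ω

/-- The inner boundary of `V`: vertices of `V` adjacent to some vertex outside `V`. -/
def innerBoundary (V : Finset Vtx) : Set Vtx := {x | x ∈ V ∧ ∃ y : Vtx, adjV x y ∧ y ∉ V}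

/-- A boundary condition on the graph induced by `V` is (the wiring relation of) a partition
of the inner boundary of `V`. -/
def IsBoundaryCondition (V : Finset Vtx) (ξ : Vtx → Vtx → Prop) : Prop :=
  Symmetric ξ ∧ Transitive ξ ∧ ∀ x y : Vtx, ξ x y → x ∈ innerBoundary V ∧ y ∈ innerBoundary V

/-- The free boundary condition: no wirings. -/
def freeBC : Vtx → Vtx → Prop := fun _ _ => False

/-- The wired boundary condition: all boundary vertices are pairwise wired. -/
def wiredBC (V : Finset Vtx) : Vtx → Vtx → Prop :=
  fun x y => x ∈ innerBoundary V ∧ y ∈ innerBoundary V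

/-- `x` and `y` are connected by an open path of `ω` staying in the vertex set `S`. -/
def openConnOn (S : Set Vtx) (ω : Edge → Bool) (x y : Vtx) : Prop :=
  Relation.ReflTransGen (fun a b => a ∈ S ∧ b ∈ S ∧ adjV a b ∧ ω s(a, b) = true) x y

/-- The vertices of the lattice rectangle `[x0, x1] × [y0, y1]`. -/
noncomputable def rectV (x0 x1 y0 y1 : ℤ) : Finset Vtx := Finset.Icc x0 x1 ×ˢ Finset.Icc y0 y1

/-- The event that the rectangle `[x0, x1] × [y0, y1]` is crossed vertically by an open path
(from its bottom side to its top side). -/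
def CrossV (x0 x1 y0 y1 : ℤ) (ω : Edge → Bool) : Prop :=
  ∃ a b : Vtx, a ∈ (rectV x0 x1 y0 y1 : Set Vtx) ∧ b ∈ (rectV x0 x1 y0 y1 : Set Vtx) ∧
    a.2 = y0 ∧ b.2 = y1 ∧ openConnOn (rectV x0 x1 y0 y1 : Set Vtx) ω a b

/-- The event that the rectangle `[x0, x1] × [y0, y1]` is crossed horizontally by an open path
(from its left side to its right side). -/
def CrossH (x0 x1 y0 y1 : ℤ) (ω : Edge → Bool) : Prop :=
  ∃ a b : Vtx, a ∈ (rectV x0 x1 y0 y1 : Set Vtx) ∧ b ∈ (rectV x0 x1 y0 y1 : Set Vtx) ∧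
    a.1 = x0 ∧ b.1 = x1 ∧ openConnOn (rectV x0 x1 y0 y1 : Set Vtx) ω a b

/-- The critical point `p_c(2) = √2 / (1 + √2)` of the FK-Ising model. -/
noncomputable def pcIsing : ℝ := Real.sqrt 2 / (1 + Real.sqrt 2)
/-- The event that the edge `e` is open. -/
def edgeOpen (e : Edge) (ω : Edge → Bool) : Prop := ω e = true

/-- The (conditional) influence of the edge `e` on the event `A`:
`I_A^p(e) = φ^ξ_{G,p,q}(A | e open) - φ^ξ_{G,p,q}(A | e closed)`. -/
noncomputable def influence (V : Finset Vtx) (ξ : Vtx → Vtx → Prop) (p q : ℝ)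
    (A : (Edge → Bool) → Prop) (e : Edge) : ℝ :=
  rcProb V ξ p q (fun ω => A ω ∧ ω e = true) / rcProb V ξ p q (fun ω => ω e = true) -
    rcProb V ξ p q (fun ω => A ω ∧ ω e = false) / rcProb V ξ p q (fun ω => ω e = false)

/-- An event is increasing if it is preserved by the addition of open edges. -/
def IncreasingEvent (A : (Edge → Bool) → Prop) : Prop :=
  ∀ ω ω' : Edge → Bool, (∀ e : Edge, ω e = true → ω' e = true) → A ω → A ω'


namespace RC

open Finset Relation

variable {V : Finset Vtx} {ξ : Vtx → Vtx → Prop} {ω ω' χ χ' : Edge → Bool} {x y u v : Vtx}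

lemma adjV_symm (h : adjV x y) : adjV y x := by
  unfold adjV at *
  rw [abs_sub_comm, abs_sub_comm y.2 x.2]
  exact h

/-- Set the edge `e` open. -/
def upd (χ : Edge → Bool) (e : Edge) : Edge → Bool := fun f => if f = e then true else χ f

/-- Reachability. -/
def reach (V : Finset Vtx) (ξ : Vtx → Vtx → Prop) (ω : Edge → Bool) : Vtx → Vtx → Prop :=
  Relation.ReflTransGen (rcStep V ξ ω)

lemma step_symm (hξ : Symmetric ξ) : Symmetric (rcStep V ξ ω) := by
  intro x y h
  rcases h with ⟨hx, hy, hadj, ho⟩ | h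
  · exact Or.inl ⟨hy, hx, adjV_symm hadj, by rwa [Sym2.eq_swap]⟩
  · exact Or.inr (hξ h)

lemma step_mem (hξV : ∀ x y, ξ x y → x ∈ V ∧ y ∈ V) (h : rcStep V ξ ω x y) :
    x ∈ V ∧ y ∈ V := by
  rcases h with ⟨hx, hy, _, _⟩ | h
  · exact ⟨hx, hy⟩
  · exact hξV _ _ h

lemma reach_symm (hξ : Symmetric ξ) (h : reach V ξ ω x y) : reach V ξ ω y x := by
  haveI : Std.Symm (rcStep V ξ ω) := ⟨fun _ _ h' => step_symm hξ h'⟩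
  exact Std.Symm.symm (r := Relation.ReflTransGen (rcStep V ξ ω)) _ _ h

lemma step_mono (hle : ∀ e, ω e = true → ω' e = true) (h : rcStep V ξ ω x y) :
    rcStep V ξ ω' x y := by
  rcases h with ⟨hx, hy, hadj, ho⟩ | h
  · exact Or.inl ⟨hx, hy, hadj, hle _ ho⟩
  · exact Or.inr h

lemma reach_mono (hle : ∀ e, ω e = true → ω' e = true) (h : reach V ξ ω x y) :
    reach V ξ ω' x y :=
  Relation.ReflTransGen.mono (fun _ _ => step_mono hle) _ _ h

lemma reach_mem (hξV : ∀ x y, ξ x y → x ∈ V ∧ y ∈ V) (hx : x ∈ V) (h : reach V ξ ω x y) :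
    y ∈ V := by
  induction h with
  | refl => exact hx
  | tail _ hstep ih => exact (step_mem hξV hstep).2

/-- The cluster of `x`. -/
def comp (V : Finset Vtx) (ξ : Vtx → Vtx → Prop) (ω : Edge → Bool) (x : Vtx) : Set Vtx :=
  {y | y ∈ V ∧ reach V ξ ω x y}

lemma mem_comp_self (hx : x ∈ V) : x ∈ comp V ξ ω x := ⟨hx, Relation.ReflTransGen.refl⟩

lemma comp_eq_of_reach (hξ : Symmetric ξ) (h : reach V ξ ω x y) :
    comp V ξ ω x = comp V ξ ω y := by
  ext z
  exact ⟨fun hz => ⟨hz.1, Relation.ReflTransGen.trans (reach_symm hξ h) hz.2⟩,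
    fun hz => ⟨hz.1, Relation.ReflTransGen.trans h hz.2⟩⟩

/-- The set of clusters, as a `Finset`. -/
noncomputable def comps (V : Finset Vtx) (ξ : Vtx → Vtx → Prop) (ω : Edge → Bool) :
    Finset (Set Vtx) := by
  classical exact V.image (comp V ξ ω)

lemma clusterCount_eq (V : Finset Vtx) (ξ : Vtx → Vtx → Prop) (ω : Edge → Bool) :
    clusterCount V ξ ω = (comps V ξ ω).card := by
  classical
  rw [clusterCount, ← Set.ncard_coe_finset]
  congr 1
  ext C
  simp only [comps, Finset.coe_image, Set.mem_image, Finset.mem_coe, Set.mem_setOf_eq]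
  constructor
  · rintro ⟨x, hx, rfl⟩; exact ⟨x, hx, rfl⟩
  · rintro ⟨x, hx, rfl⟩; exact ⟨x, hx, rfl⟩

lemma comps_congr (h : reach V ξ ω = reach V ξ ω') : comps V ξ ω = comps V ξ ω' := by
  classical
  unfold comps comp
  rw [h]

lemma step_upd_iff (hu : u ∈ V) (hv : v ∈ V) (hadj : adjV u v) :
    rcStep V ξ (upd χ s(u, v)) x y ↔
      rcStep V ξ χ x y ∨ (x = u ∧ y = v) ∨ (x = v ∧ y = u) := by
  constructor
  · rintro (⟨hx, hy, hadj', ho⟩ | h)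
    · by_cases he : s(x, y) = s(u, v)
      · rw [Sym2.eq_iff] at he
        rcases he with ⟨rfl, rfl⟩ | ⟨rfl, rfl⟩
        · exact Or.inr (Or.inl ⟨rfl, rfl⟩)
        · exact Or.inr (Or.inr ⟨rfl, rfl⟩)
      · rw [upd, if_neg he] at ho
        exact Or.inl (Or.inl ⟨hx, hy, hadj', ho⟩)
    · exact Or.inl (Or.inr h)
  · rintro (h | ⟨rfl, rfl⟩ | ⟨rfl, rfl⟩)
    · exact step_mono (fun f hf => by unfold upd; split <;> simp [hf]) h
    · exact Or.inl ⟨hu, hv, hadj, by rw [upd, if_pos rfl]⟩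
    · exact Or.inl ⟨hv, hu, adjV_symm hadj, by rw [upd, if_pos (Sym2.eq_swap)]⟩

lemma reach_upd_iff (hu : u ∈ V) (hv : v ∈ V) (hadj : adjV u v) :
    reach V ξ (upd χ s(u, v)) x y ↔
      reach V ξ χ x y ∨ (reach V ξ χ x u ∧ reach V ξ χ v y) ∨
        (reach V ξ χ x v ∧ reach V ξ χ u y) := by
  constructor
  · intro h
    induction h with
    | refl => exact Or.inl Relation.ReflTransGen.refl
    | tail hxb hstep ih =>
      rcases (step_upd_iff hu hv hadj).1 hstep with hs | ⟨rfl, rfl⟩ | ⟨rfl, rfl⟩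
      · rcases ih with h1 | ⟨h1, h2⟩ | ⟨h1, h2⟩
        · exact Or.inl (h1.tail hs)
        · exact Or.inr (Or.inl ⟨h1, h2.tail hs⟩)
        · exact Or.inr (Or.inr ⟨h1, h2.tail hs⟩)
      · rcases ih with h1 | ⟨h1, h2⟩ | ⟨h1, h2⟩
        · exact Or.inr (Or.inl ⟨h1, Relation.ReflTransGen.refl⟩)
        · exact Or.inr (Or.inl ⟨h1, Relation.ReflTransGen.refl⟩)
        · exact Or.inl h1
      · rcases ih with h1 | ⟨h1, h2⟩ | ⟨h1, h2⟩
        · exact Or.inr (Or.inr ⟨h1, Relation.ReflTransGen.refl⟩)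
        · exact Or.inl h1
        · exact Or.inr (Or.inr ⟨h1, Relation.ReflTransGen.refl⟩)
  · have hmono : ∀ {a b}, reach V ξ χ a b → reach V ξ (upd χ s(u, v)) a b :=
      fun h => reach_mono (fun f hf => by unfold upd; split <;> simp [hf]) h
    have huv : reach V ξ (upd χ s(u, v)) u v :=
      Relation.ReflTransGen.single (Or.inl ⟨hu, hv, hadj, by rw [upd, if_pos rfl]⟩)
    rintro (h | ⟨h1, h2⟩ | ⟨h1, h2⟩)
    · exact hmono h
    · exact ((hmono h1).trans huv).trans (hmono h2)
    · have hvu : reach V ξ (upd χ s(u, v)) v u :=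
        Relation.ReflTransGen.single (Or.inl ⟨hv, hu, adjV_symm hadj, by
          rw [upd, if_pos (Sym2.eq_swap)]⟩)
      exact ((hmono h1).trans hvu).trans (hmono h2)


lemma K_upd_of_reach (hξ : Symmetric ξ) (hu : u ∈ V) (hv : v ∈ V) (hadj : adjV u v)
    (h : reach V ξ χ u v) :
    clusterCount V ξ (upd χ s(u, v)) = clusterCount V ξ χ := by
  rw [clusterCount_eq, clusterCount_eq]
  congr 1
  apply comps_congr
  funext x y
  apply propext
  rw [reach_upd_iff hu hv hadj]
  constructor
  · rintro (h1 | ⟨h1, h2⟩ | ⟨h1, h2⟩)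
    · exact h1
    · exact (h1.trans h).trans h2
    · exact (h1.trans (reach_symm hξ h)).trans h2
  · exact Or.inl

lemma K_upd_of_not_reach (hξ : Symmetric ξ) (hξV : ∀ x y, ξ x y → x ∈ V ∧ y ∈ V)
    (hu : u ∈ V) (hv : v ∈ V) (hadj : adjV u v) (h : ¬ reach V ξ χ u v) :
    clusterCount V ξ (upd χ s(u, v)) + 1 = clusterCount V ξ χ := by
  classical
  set f := comp V ξ χ with hf
  set fo := comp V ξ (upd χ s(u, v)) with hfo
  -- characterization of new components
  have hjoin : ∀ x, (reach V ξ χ x u ∨ reach V ξ χ x v) → fo x = f u ∪ f v := by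
    intro x hx
    ext y
    simp only [hfo, hf, comp, Set.mem_setOf_eq, Set.mem_union, reach_upd_iff hu hv hadj]
    constructor
    · rintro ⟨hy, h1 | ⟨h1, h2⟩ | ⟨h1, h2⟩⟩
      · rcases hx with hx | hx
        · exact Or.inl ⟨hy, (reach_symm hξ hx).trans h1⟩
        · exact Or.inr ⟨hy, (reach_symm hξ hx).trans h1⟩
      · exact Or.inr ⟨hy, h2⟩
      · exact Or.inl ⟨hy, h2⟩
    · rintro (⟨hy, hr⟩ | ⟨hy, hr⟩)
      · rcases hx with hx | hx
        · exact ⟨hy, Or.inl (hx.trans hr)⟩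
        · exact ⟨hy, Or.inr (Or.inr ⟨hx, hr⟩)⟩
      · rcases hx with hx | hx
        · exact ⟨hy, Or.inr (Or.inl ⟨hx, hr⟩)⟩
        · exact ⟨hy, Or.inl (hx.trans hr)⟩
  have hkeep : ∀ x, ¬ reach V ξ χ x u → ¬ reach V ξ χ x v → fo x = f x := by
    intro x h1 h2
    ext y
    simp only [hfo, hf, comp, Set.mem_setOf_eq, reach_upd_iff hu hv hadj]
    constructor
    · rintro ⟨hy, hr | ⟨hr1, hr2⟩ | ⟨hr1, hr2⟩⟩
      · exact ⟨hy, hr⟩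
      · exact absurd hr1 h1
      · exact absurd hr1 h2
    · rintro ⟨hy, hr⟩
      exact ⟨hy, Or.inl hr⟩
  -- distinctness facts
  have hvnotfu : v ∉ f u := fun hc => h hc.2
  have hunotfv : u ∉ f v := fun hc => h (reach_symm hξ hc.2)
  have hfufv : f u ≠ f v := fun hc => hvnotfu (hc ▸ mem_comp_self hv)
  have hfu_mem : f u ∈ V.image f := Finset.mem_image_of_mem f hu
  have hfv_mem : f v ∈ (V.image f).erase (f u) :=
    Finset.mem_erase.2 ⟨fun hc => hfufv hc.symm, Finset.mem_image_of_mem f hv⟩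
  have hU_not : f u ∪ f v ∉ V.image f := by
    intro hc
    rcases Finset.mem_image.1 hc with ⟨x, hx, hfx⟩
    have hxu : reach V ξ χ x u := by
      have : u ∈ f u ∪ f v := Or.inl (mem_comp_self hu)
      rw [← hfx] at this
      exact this.2
    have hxv : reach V ξ χ x v := by
      have : v ∈ f u ∪ f v := Or.inr (mem_comp_self hv)
      rw [← hfx] at this
      exact this.2
    exact h ((reach_symm hξ hxu).trans hxv)
  -- the image identity
  have himg : V.image fo = insert (f u ∪ f v) (((V.image f).erase (f u)).erase (f v)) := by
    ext C
    simp only [Finset.mem_image, Finset.mem_insert, Finset.mem_erase]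
    constructor
    · rintro ⟨x, hx, rfl⟩
      by_cases h1 : reach V ξ χ x u
      · exact Or.inl (hjoin x (Or.inl h1))
      · by_cases h2 : reach V ξ χ x v
        · exact Or.inl (hjoin x (Or.inr h2))
        · refine Or.inr ⟨?_, ?_, x, hx, (hkeep x h1 h2).symm ▸ rfl⟩
          · rw [hkeep x h1 h2]
            intro hc
            exact h2 (by
              have : x ∈ f v := hc ▸ mem_comp_self hx
              exact reach_symm hξ this.2)
          · rw [hkeep x h1 h2]
            intro hc
            exact h1 (by
              have : x ∈ f u := hc ▸ mem_comp_self hx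
              exact reach_symm hξ this.2)
    · rintro (rfl | ⟨hne2, hne1, x, hx, rfl⟩)
      · exact ⟨u, hu, hjoin u (Or.inl Relation.ReflTransGen.refl)⟩
      · refine ⟨x, hx, hkeep x ?_ ?_⟩
        · intro hc
          exact hne1 (comp_eq_of_reach hξ hc)
        · intro hc
          exact hne2 (comp_eq_of_reach hξ hc)
  -- counting
  rw [clusterCount_eq, clusterCount_eq]
  show (V.image fo).card + 1 = (V.image f).card
  rw [himg]
  have hUnot' : f u ∪ f v ∉ ((V.image f).erase (f u)).erase (f v) := by
    intro hc
    exact hU_not (Finset.mem_of_mem_erase (Finset.mem_of_mem_erase hc))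
  rw [Finset.card_insert_of_notMem hUnot', Finset.card_erase_of_mem hfv_mem,
    Finset.card_erase_of_mem hfu_mem]
  have h1 : 1 ≤ ((V.image f).erase (f u)).card := Finset.card_pos.2 ⟨f v, hfv_mem⟩
  have h2 : 1 ≤ (V.image f).card := Finset.card_pos.2 ⟨f u, hfu_mem⟩
  have h3 : ((V.image f).erase (f u)).card = (V.image f).card - 1 :=
    Finset.card_erase_of_mem hfu_mem
  omega

lemma K_upd_le (hξ : Symmetric ξ) (hξV : ∀ x y, ξ x y → x ∈ V ∧ y ∈ V)
    (hu : u ∈ V) (hv : v ∈ V) (hadj : adjV u v) :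
    clusterCount V ξ (upd χ s(u, v)) ≤ clusterCount V ξ χ ∧
      clusterCount V ξ χ ≤ clusterCount V ξ (upd χ s(u, v)) + 1 := by
  by_cases h : reach V ξ χ u v
  · rw [K_upd_of_reach hξ hu hv hadj h]
    omega
  · have := K_upd_of_not_reach hξ hξV hu hv hadj h
    omega

lemma K_upd_not_genuine (hg : ∀ a b, a ∈ V → b ∈ V → adjV a b → s(a, b) ≠ e) (χ : Edge → Bool) :
    clusterCount V ξ (upd χ e) = clusterCount V ξ χ := by
  rw [clusterCount_eq, clusterCount_eq]
  congr 1
  apply comps_congr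
  have : rcStep V ξ (upd χ e) = rcStep V ξ χ := by
    funext x y
    apply propext
    constructor
    · rintro (⟨hx, hy, hadj, ho⟩ | h)
      · rw [upd, if_neg (hg x y hx hy hadj)] at ho
        exact Or.inl ⟨hx, hy, hadj, ho⟩
      · exact Or.inr h
    · rintro (⟨hx, hy, hadj, ho⟩ | h)
      · exact Or.inl ⟨hx, hy, hadj, by rw [upd, if_neg (hg x y hx hy hadj)]; exact ho⟩
      · exact Or.inr h
  unfold reach
  rw [this]

lemma K_upd_step (hξ : Symmetric ξ) (hξV : ∀ x y, ξ x y → x ∈ V ∧ y ∈ V)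
    (χ χ' : Edge → Bool) (hle : ∀ f, χ f = true → χ' f = true) (e : Edge) :
    clusterCount V ξ (upd χ e) + clusterCount V ξ χ' ≤
      clusterCount V ξ (upd χ' e) + clusterCount V ξ χ := by
  by_cases hg : ∃ u v, u ∈ V ∧ v ∈ V ∧ adjV u v ∧ e = s(u, v)
  · obtain ⟨u, v, hu, hv, hadj, rfl⟩ := hg
    by_cases hr : reach V ξ χ' u v
    · rw [K_upd_of_reach hξ hu hv hadj hr]
      have := (K_upd_le (χ := χ) hξ hξV hu hv hadj).1
      omega
    · have hr' : ¬ reach V ξ χ u v := fun hc => hr (reach_mono hle hc)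
      have h1 := K_upd_of_not_reach hξ hξV hu hv hadj hr
      have h2 := K_upd_of_not_reach hξ hξV hu hv hadj hr'
      omega
  · push_neg at hg
    rw [K_upd_not_genuine (fun a b ha hb hadj hc => hg a b ha hb hadj hc.symm) χ,
      K_upd_not_genuine (fun a b ha hb hadj hc => hg a b ha hb hadj hc.symm) χ']
    omega

/-- Open all edges of `F`. -/
def updF (χ : Edge → Bool) (F : Finset Edge) : Edge → Bool := fun f => if f ∈ F then true else χ f

lemma updF_insert (χ : Edge → Bool) (e : Edge) (F : Finset Edge) :
    updF χ (insert e F) = upd (updF χ F) e := by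
  funext f
  simp only [updF, upd, Finset.mem_insert]
  by_cases h1 : f = e <;> by_cases h2 : f ∈ F <;> simp [h1, h2]

lemma supmod_aux (hξ : Symmetric ξ) (hξV : ∀ x y, ξ x y → x ∈ V ∧ y ∈ V)
    (F : Finset Edge) (χ χ' : Edge → Bool) (hle : ∀ f, χ f = true → χ' f = true) :
    clusterCount V ξ (updF χ F) + clusterCount V ξ χ' ≤
      clusterCount V ξ (updF χ' F) + clusterCount V ξ χ := by
  classical
  induction F using Finset.induction_on with
  | empty =>
    have h1 : updF χ ∅ = χ := by funext f; simp [updF]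
    have h2 : updF χ' ∅ = χ' := by funext f; simp [updF]
    rw [h1, h2]
    omega
  | @insert e F he ih =>
    rw [updF_insert, updF_insert]
    have hle' : ∀ f, updF χ F f = true → updF χ' F f = true := by
      intro f hf
      simp only [updF] at hf ⊢
      split at hf
      · simp [*]
      · simp [hle f hf]
    have := K_upd_step hξ hξV (updF χ F) (updF χ' F) hle' e
    omega

lemma K_supermodular (hξ : Symmetric ξ) (hξV : ∀ x y, ξ x y → x ∈ V ∧ y ∈ V)
    (ω η : Edge → Bool) (F : Finset Edge) (hF : ∀ f, ω f ≠ η f → f ∈ F) :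
    clusterCount V ξ ω + clusterCount V ξ η ≤
      clusterCount V ξ (fun f => ω f || η f) + clusterCount V ξ (fun f => ω f && η f) := by
  classical
  set F' : Finset Edge := F.filter (fun f => ω f = true ∧ η f = false) with hF'
  have h1 : updF (fun f => ω f && η f) F' = ω := by
    funext f
    simp only [updF, hF', Finset.mem_filter]
    by_cases h : ω f = true ∧ η f = false
    · rcases h with ⟨h1, h2⟩
      have hf : f ∈ F := hF f (by rw [h1, h2]; simp)
      simp [hf, h1, h2]
    · have : ω f = η f ∨ (ω f = false ∧ η f = true) ∨ (ω f = η f) := by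
        cases hω : ω f <;> cases hη : η f <;> simp_all
      rcases this with h' | ⟨h1, h2⟩ | h'
      · simp [h, h', Bool.and_self]
      · simp [h, h1, h2]
      · simp [h, h', Bool.and_self]
  have h2 : updF η F' = fun f => ω f || η f := by
    funext f
    simp only [updF, hF', Finset.mem_filter]
    by_cases h : ω f = true ∧ η f = false
    · rcases h with ⟨h1, h2⟩
      have hf : f ∈ F := hF f (by rw [h1, h2]; simp)
      simp [hf, h1, h2]
    · cases hω : ω f <;> cases hη : η f <;> simp_all
  have hle : ∀ f, (fun f => ω f && η f) f = true → η f = true := by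
    intro f hf
    simp only [Bool.and_eq_true] at hf
    exact hf.2
  have := supmod_aux hξ hξV F' (fun f => ω f && η f) η hle
  rw [h1, h2] at this
  omega

end RC

namespace RC

open Finset

variable (V : Finset Vtx) (ξ : Vtx → Vtx → Prop)

open Classical in
/-- Unnormalized measure of the event `P`. -/
noncomputable def S (x q : ℝ) (P : (Edge → Bool) → Prop) : ℝ :=
  ∑ ω : {e // e ∈ edgeFinset V} → Bool,
    if P (extendConfig (edgeFinset V) ω) then rcWeight V ξ x q ω else 0

/-- Number of open edges of a configuration. -/
def openCount (ω : {e // e ∈ edgeFinset V} → Bool) : ℕ :=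
  (Finset.univ.filter (fun e => ω e = true)).card

/-- Number of closed edges of a configuration. -/
def closedCount (ω : {e // e ∈ edgeFinset V} → Bool) : ℕ :=
  (Finset.univ.filter (fun e => ω e = false)).card

open Classical in
/-- Unnormalized expectation of the number of open edges on the event `P`. -/
noncomputable def SO (x q : ℝ) (P : (Edge → Bool) → Prop) : ℝ :=
  ∑ ω : {e // e ∈ edgeFinset V} → Bool,
    if P (extendConfig (edgeFinset V) ω) then (openCount V ω : ℝ) * rcWeight V ξ x q ω else 0

lemma rcProb_eq (x q : ℝ) (A : (Edge → Bool) → Prop) :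
    rcProb V ξ x q A = S V ξ x q A / S V ξ x q (fun _ => True) := by
  classical
  unfold rcProb S
  congr 1
  apply Finset.sum_congr rfl
  intro ω _
  simp

lemma count_add (ω : {e // e ∈ edgeFinset V} → Bool) :
    openCount V ω + closedCount V ω = (edgeFinset V).card := by
  classical
  unfold openCount closedCount
  rw [Finset.card_filter, Finset.card_filter, ← Finset.sum_add_distrib]
  have h : ∀ i : {e // e ∈ edgeFinset V},
      ((if ω i = true then 1 else 0) + (if ω i = false then 1 else 0) : ℕ) = 1 := by
    intro i; cases h : ω i <;> simp [h]
  rw [Finset.sum_congr rfl (fun i _ => h i), Finset.sum_const, smul_eq_mul, mul_one,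
    Finset.card_univ, Fintype.card_coe]

lemma cast_mul_pow_sub_one (n : ℕ) (x : ℝ) : (n : ℝ) * x ^ (n - 1) * x = (n : ℝ) * x ^ n := by
  cases n with
  | zero => simp
  | succ m => rw [Nat.succ_sub_one, pow_succ]; ring

lemma weight_deriv_eq {p : ℝ} (hp0 : p ≠ 0) (hp1 : (1 : ℝ) - p ≠ 0) (a b : ℕ) (C : ℝ) :
    ((a : ℝ) * p ^ (a - 1) * (1 - p) ^ b + p ^ a * ((b : ℝ) * (1 - p) ^ (b - 1) * (-1))) * C =
      p ^ a * (1 - p) ^ b * C * ((a : ℝ) - ((a : ℝ) + (b : ℝ)) * p) / (p * (1 - p)) := by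
  rw [eq_div_iff (mul_ne_zero hp0 hp1)]
  have h1 : (a : ℝ) * p ^ (a - 1) * p = (a : ℝ) * p ^ a := cast_mul_pow_sub_one a p
  have h2 : (b : ℝ) * (1 - p) ^ (b - 1) * (1 - p) = (b : ℝ) * (1 - p) ^ b :=
    cast_mul_pow_sub_one b (1 - p)
  linear_combination ((1 - p) ^ b * (1 - p) * C) * h1 - (p ^ a * p * C) * h2

lemma hasDerivAt_weight {p : ℝ} (q : ℝ) (hp0 : p ≠ 0) (hp1 : (1 : ℝ) - p ≠ 0)
    (ω : {e // e ∈ edgeFinset V} → Bool) :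
    HasDerivAt (fun x : ℝ => rcWeight V ξ x q ω)
      (rcWeight V ξ p q ω * ((openCount V ω : ℝ) - ((edgeFinset V).card : ℝ) * p) /
        (p * (1 - p))) p := by
  unfold rcWeight
  have h1x : HasDerivAt (fun x : ℝ => 1 - x) (-1) p := by
    simpa using (hasDerivAt_id' p).const_sub (1 : ℝ)
  have h1 : HasDerivAt
      (fun x : ℝ => x ^ openCount V ω * (1 - x) ^ closedCount V ω *
        q ^ clusterCount V ξ (extendConfig (edgeFinset V) ω))
      (((openCount V ω : ℝ) * p ^ (openCount V ω - 1) * (1 - p) ^ closedCount V ω +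
        p ^ openCount V ω * ((closedCount V ω : ℝ) * (1 - p) ^ (closedCount V ω - 1) * (-1))) *
        q ^ clusterCount V ξ (extendConfig (edgeFinset V) ω)) p :=
    ((hasDerivAt_pow (openCount V ω) p).mul (h1x.pow (closedCount V ω))).mul_const _
  have heq := weight_deriv_eq hp0 hp1 (openCount V ω) (closedCount V ω)
    (q ^ clusterCount V ξ (extendConfig (edgeFinset V) ω))
  rw [heq] at h1
  have hcount : ((openCount V ω : ℝ) + (closedCount V ω : ℝ)) = ((edgeFinset V).card : ℝ) := by
    rw [← Nat.cast_add, count_add]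
  rw [hcount] at h1
  exact h1

lemma hasDerivAt_S {p : ℝ} (q : ℝ) (hp0 : p ≠ 0) (hp1 : (1 : ℝ) - p ≠ 0)
    (P : (Edge → Bool) → Prop) :
    HasDerivAt (fun x : ℝ => S V ξ x q P)
      ((SO V ξ p q P - ((edgeFinset V).card : ℝ) * p * S V ξ p q P) / (p * (1 - p))) p := by
  classical
  have h1 : HasDerivAt (fun x : ℝ => S V ξ x q P)
      (∑ ω : {e // e ∈ edgeFinset V} → Bool,
        if P (extendConfig (edgeFinset V) ω) then
          rcWeight V ξ p q ω * ((openCount V ω : ℝ) - ((edgeFinset V).card : ℝ) * p) /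
            (p * (1 - p))
        else 0) p := by
    unfold S
    apply HasDerivAt.fun_sum
    intro ω _
    by_cases h : P (extendConfig (edgeFinset V) ω)
    · simp only [if_pos h]
      exact hasDerivAt_weight V ξ q hp0 hp1 ω
    · simp only [if_neg h]
      exact hasDerivAt_const p 0
  convert h1 using 1
  unfold SO S
  have h2 : ∀ ω : {e // e ∈ edgeFinset V} → Bool,
      (if P (extendConfig (edgeFinset V) ω) then
          rcWeight V ξ p q ω * ((openCount V ω : ℝ) - ((edgeFinset V).card : ℝ) * p) /
            (p * (1 - p))
        else 0) =
      ((if P (extendConfig (edgeFinset V) ω) then (openCount V ω : ℝ) * rcWeight V ξ p q ω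
          else 0) -
        ((edgeFinset V).card : ℝ) * p *
          (if P (extendConfig (edgeFinset V) ω) then rcWeight V ξ p q ω else 0)) /
        (p * (1 - p)) := by
    intro ω
    by_cases h : P (extendConfig (edgeFinset V) ω)
    · simp only [if_pos h]; ring
    · simp only [if_neg h]; simp
  rw [Finset.sum_congr rfl (fun ω _ => h2 ω), ← Finset.sum_div, Finset.sum_sub_distrib,
    ← Finset.mul_sum]

end RC

namespace RC

open Finset

variable (V : Finset Vtx) (ξ : Vtx → Vtx → Prop)

lemma extendConfig_coe (ω : {e // e ∈ edgeFinset V} → Bool) (i : {e // e ∈ edgeFinset V}) :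
    extendConfig (edgeFinset V) ω ↑i = ω i := dif_pos i.2

lemma weight_pos {p q : ℝ} (hp0 : 0 < p) (hp1 : p < 1) (hq : 0 < q)
    (ω : {e // e ∈ edgeFinset V} → Bool) : 0 < rcWeight V ξ p q ω := by
  unfold rcWeight
  have h1 : (0 : ℝ) < 1 - p := by linarith
  positivity

lemma S_nonneg {p q : ℝ} (hp0 : 0 < p) (hp1 : p < 1) (hq : 0 < q) (P : (Edge → Bool) → Prop) :
    0 ≤ S V ξ p q P := by
  classical
  apply Finset.sum_nonneg
  intro ω _
  split
  · exact (weight_pos V ξ hp0 hp1 hq ω).le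
  · exact le_refl 0

lemma S_top_pos {p q : ℝ} (hp0 : 0 < p) (hp1 : p < 1) (hq : 0 < q) :
    0 < S V ξ p q (fun _ => True) := by
  classical
  unfold S
  apply Finset.sum_pos
  · intro ω _
    simp only [if_true]
    exact weight_pos V ξ hp0 hp1 hq ω
  · exact Finset.univ_nonempty

lemma S_open_pos {p q : ℝ} (hp0 : 0 < p) (hp1 : p < 1) (hq : 0 < q)
    {e : Edge} (he : e ∈ edgeFinset V) :
    0 < S V ξ p q (fun ω' => ω' e = true) := by
  classical
  unfold S
  apply Finset.sum_pos'
  · intro ω _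
    split
    · exact (weight_pos V ξ hp0 hp1 hq ω).le
    · exact le_refl 0
  · refine ⟨fun _ => true, Finset.mem_univ _, ?_⟩
    rw [if_pos]
    · exact weight_pos V ξ hp0 hp1 hq _
    · show extendConfig (edgeFinset V) (fun _ => true) e = true
      unfold extendConfig
      rw [dif_pos he]

lemma S_closed_pos {p q : ℝ} (hp0 : 0 < p) (hp1 : p < 1) (hq : 0 < q)
    {e : Edge} (he : e ∈ edgeFinset V) :
    0 < S V ξ p q (fun ω' => ω' e = false) := by
  classical
  unfold S
  apply Finset.sum_pos'
  · intro ω _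
    split
    · exact (weight_pos V ξ hp0 hp1 hq ω).le
    · exact le_refl 0
  · refine ⟨fun _ => false, Finset.mem_univ _, ?_⟩
    rw [if_pos]
    · exact weight_pos V ξ hp0 hp1 hq _
    · show extendConfig (edgeFinset V) (fun _ => false) e = false
      unfold extendConfig
      rw [dif_pos he]

lemma S_split (p q : ℝ) (P : (Edge → Bool) → Prop) (e : Edge) :
    S V ξ p q (fun ω => P ω ∧ ω e = true) + S V ξ p q (fun ω => P ω ∧ ω e = false) =
      S V ξ p q P := by
  classical
  unfold S
  rw [← Finset.sum_add_distrib]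
  apply Finset.sum_congr rfl
  intro ω _
  by_cases hP : P (extendConfig (edgeFinset V) ω) <;>
    cases h : extendConfig (edgeFinset V) ω e <;> simp [hP, h]

lemma SO_eq (p q : ℝ) (P : (Edge → Bool) → Prop) :
    SO V ξ p q P = ∑ e ∈ edgeFinset V, S V ξ p q (fun ω => P ω ∧ ω e = true) := by
  classical
  unfold SO S
  have h1 : ∀ ω : {e // e ∈ edgeFinset V} → Bool,
      (if P (extendConfig (edgeFinset V) ω) then (openCount V ω : ℝ) * rcWeight V ξ p q ω
        else 0) =
      ∑ i : {e // e ∈ edgeFinset V},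
        if P (extendConfig (edgeFinset V) ω) ∧ ω i = true then rcWeight V ξ p q ω else 0 := by
    intro ω
    by_cases h : P (extendConfig (edgeFinset V) ω)
    · simp only [if_pos h, true_and]
      rw [openCount, Finset.card_filter]
      push_cast
      rw [Finset.sum_mul]
      apply Finset.sum_congr rfl
      intro i _
      by_cases hi : ω i = true <;> simp [h, hi]
    · simp [h]
  rw [Finset.sum_congr rfl (fun ω _ => h1 ω), Finset.sum_comm,
    ← Finset.sum_coe_sort (edgeFinset V)]
  apply Finset.sum_congr rfl
  intro i _
  apply Finset.sum_congr rfl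
  intro ω _
  simp only [extendConfig_coe]

end RC

namespace RC

open Finset

variable (V : Finset Vtx) (ξ : Vtx → Vtx → Prop)

lemma ext_sup (ω η : {e // e ∈ edgeFinset V} → Bool) :
    extendConfig (edgeFinset V) (ω ⊔ η) =
      fun f => extendConfig (edgeFinset V) ω f || extendConfig (edgeFinset V) η f := by
  funext f
  unfold extendConfig
  by_cases h : f ∈ edgeFinset V
  · rw [dif_pos h, dif_pos h, dif_pos h]
    rfl
  · rw [dif_neg h, dif_neg h, dif_neg h]
    rfl

lemma ext_inf (ω η : {e // e ∈ edgeFinset V} → Bool) :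
    extendConfig (edgeFinset V) (ω ⊓ η) =
      fun f => extendConfig (edgeFinset V) ω f && extendConfig (edgeFinset V) η f := by
  funext f
  unfold extendConfig
  by_cases h : f ∈ edgeFinset V
  · rw [dif_pos h, dif_pos h, dif_pos h]
    rfl
  · rw [dif_neg h, dif_neg h, dif_neg h]
    rfl

lemma openCount_supmod (ω η : {e // e ∈ edgeFinset V} → Bool) :
    openCount V (ω ⊔ η) + openCount V (ω ⊓ η) = openCount V ω + openCount V η := by
  classical
  unfold openCount
  rw [Finset.card_filter, Finset.card_filter, Finset.card_filter, Finset.card_filter,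
    ← Finset.sum_add_distrib, ← Finset.sum_add_distrib]
  apply Finset.sum_congr rfl
  intro i _
  have hs : (ω ⊔ η) i = (ω i || η i) := rfl
  have hi : (ω ⊓ η) i = (ω i && η i) := rfl
  rw [hs, hi]
  cases h1 : ω i <;> cases h2 : η i <;> simp

lemma closedCount_supmod (ω η : {e // e ∈ edgeFinset V} → Bool) :
    closedCount V (ω ⊔ η) + closedCount V (ω ⊓ η) = closedCount V ω + closedCount V η := by
  classical
  unfold closedCount
  rw [Finset.card_filter, Finset.card_filter, Finset.card_filter, Finset.card_filter,
    ← Finset.sum_add_distrib, ← Finset.sum_add_distrib]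
  apply Finset.sum_congr rfl
  intro i _
  have hs : (ω ⊔ η) i = (ω i || η i) := rfl
  have hi : (ω ⊓ η) i = (ω i && η i) := rfl
  rw [hs, hi]
  cases h1 : ω i <;> cases h2 : η i <;> simp

lemma K_ext_supmod (hξ : Symmetric ξ) (hξV : ∀ x y, ξ x y → x ∈ V ∧ y ∈ V)
    (ω η : {e // e ∈ edgeFinset V} → Bool) :
    clusterCount V ξ (extendConfig (edgeFinset V) ω) +
        clusterCount V ξ (extendConfig (edgeFinset V) η) ≤
      clusterCount V ξ (extendConfig (edgeFinset V) (ω ⊔ η)) +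
        clusterCount V ξ (extendConfig (edgeFinset V) (ω ⊓ η)) := by
  rw [ext_sup, ext_inf]
  apply K_supermodular hξ hξV _ _ (edgeFinset V)
  intro f hf
  by_contra hfE
  apply hf
  unfold extendConfig
  rw [dif_neg hfE, dif_neg hfE]

lemma rcWeight_eq (p q : ℝ) (ω : {e // e ∈ edgeFinset V} → Bool) :
    rcWeight V ξ p q ω = p ^ openCount V ω * (1 - p) ^ closedCount V ω *
      q ^ clusterCount V ξ (extendConfig (edgeFinset V) ω) := rfl

lemma weight_supmod {p q : ℝ} (hq : 1 ≤ q) (hp0 : 0 ≤ p) (hp1 : p ≤ 1)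
    (hξ : Symmetric ξ) (hξV : ∀ x y, ξ x y → x ∈ V ∧ y ∈ V)
    (ω η : {e // e ∈ edgeFinset V} → Bool) :
    rcWeight V ξ p q ω * rcWeight V ξ p q η ≤
      rcWeight V ξ p q (ω ⊓ η) * rcWeight V ξ p q (ω ⊔ η) := by
  have hq0 : (0 : ℝ) < q := lt_of_lt_of_le one_pos hq
  have h1p : (0 : ℝ) ≤ 1 - p := by linarith
  rw [rcWeight_eq, rcWeight_eq, rcWeight_eq, rcWeight_eq]
  have hLHS : p ^ openCount V ω * (1 - p) ^ closedCount V ω *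
        q ^ clusterCount V ξ (extendConfig (edgeFinset V) ω) *
      (p ^ openCount V η * (1 - p) ^ closedCount V η *
        q ^ clusterCount V ξ (extendConfig (edgeFinset V) η)) =
      p ^ (openCount V ω + openCount V η) * (1 - p) ^ (closedCount V ω + closedCount V η) *
        q ^ (clusterCount V ξ (extendConfig (edgeFinset V) ω) +
          clusterCount V ξ (extendConfig (edgeFinset V) η)) := by
    rw [pow_add, pow_add, pow_add]; ring
  have hRHS : p ^ openCount V (ω ⊓ η) * (1 - p) ^ closedCount V (ω ⊓ η) *
        q ^ clusterCount V ξ (extendConfig (edgeFinset V) (ω ⊓ η)) *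
      (p ^ openCount V (ω ⊔ η) * (1 - p) ^ closedCount V (ω ⊔ η) *
        q ^ clusterCount V ξ (extendConfig (edgeFinset V) (ω ⊔ η))) =
      p ^ (openCount V ω + openCount V η) * (1 - p) ^ (closedCount V ω + closedCount V η) *
        q ^ (clusterCount V ξ (extendConfig (edgeFinset V) (ω ⊔ η)) +
          clusterCount V ξ (extendConfig (edgeFinset V) (ω ⊓ η))) := by
    rw [← openCount_supmod V ω η, ← closedCount_supmod V ω η, pow_add, pow_add, pow_add]
    ring
  rw [hLHS, hRHS]
  apply mul_le_mul_of_nonneg_left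
  · exact pow_le_pow_right₀ hq (K_ext_supmod V ξ hξ hξV ω η)
  · positivity

lemma Ne_nonneg {p q : ℝ} (hq : 1 ≤ q) (hp0 : 0 < p) (hp1 : p < 1)
    (hξ : Symmetric ξ) (hξV : ∀ x y, ξ x y → x ∈ V ∧ y ∈ V)
    (A : (Edge → Bool) → Prop) (hA : IncreasingEvent A) (i : {e // e ∈ edgeFinset V}) :
    S V ξ p q A * S V ξ p q (fun ω' => ω' ↑i = true) ≤
      S V ξ p q (fun _ => True) * S V ξ p q (fun ω => A ω ∧ ω ↑i = true) := by
  classical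
  set μ : ({e // e ∈ edgeFinset V} → Bool) → ℝ := fun ω => rcWeight V ξ p q ω with hμdef
  set f : ({e // e ∈ edgeFinset V} → Bool) → ℝ :=
    fun ω => if A (extendConfig (edgeFinset V) ω) then 1 else 0 with hfdef
  set g : ({e // e ∈ edgeFinset V} → Bool) → ℝ := fun ω => if ω i = true then 1 else 0 with hgdef
  have hext_mono : ∀ (a b : {e // e ∈ edgeFinset V} → Bool), a ≤ b →
      ∀ e : Edge, extendConfig (edgeFinset V) a e = true →
        extendConfig (edgeFinset V) b e = true := by
    intro a b hab e he
    unfold extendConfig at he ⊢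
    by_cases h : e ∈ edgeFinset V
    · rw [dif_pos h] at he ⊢
      exact Bool.le_iff_imp.mp (hab _) he
    · rw [dif_neg h] at he
      exact absurd he (by simp)
  have hμ0 : 0 ≤ μ := fun ω => (weight_pos V ξ hp0 hp1 (lt_of_lt_of_le one_pos hq) ω).le
  have hf0 : 0 ≤ f := by
    intro ω
    simp only [hfdef]
    split <;> norm_num
  have hg0 : 0 ≤ g := by
    intro ω
    simp only [hgdef]
    split <;> norm_num
  have hf : Monotone f := by
    intro a b hab
    simp only [hfdef]
    by_cases h : A (extendConfig (edgeFinset V) a)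
    · rw [if_pos h, if_pos (hA _ _ (hext_mono a b hab) h)]
    · rw [if_neg h]
      split <;> norm_num
  have hg : Monotone g := by
    intro a b hab
    simp only [hgdef]
    by_cases h : a i = true
    · rw [if_pos h, if_pos (Bool.le_iff_imp.mp (hab i) h)]
    · rw [if_neg h]
      split <;> norm_num
  have hsup : ∀ a b : {e // e ∈ edgeFinset V} → Bool, μ a * μ b ≤ μ (a ⊓ b) * μ (a ⊔ b) :=
    fun a b => weight_supmod V ξ hq hp0.le hp1.le hξ hξV a b
  have hfkg := fkg (μ := μ) (f := f) (g := g) hμ0 hf0 hg0 hf hg hsup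
  have e1 : ∑ a, μ a * f a = S V ξ p q A := by
    unfold S
    apply Finset.sum_congr rfl
    intro ω _
    simp only [hμdef, hfdef, mul_ite, mul_one, mul_zero]
  have e2 : ∑ a, μ a * g a = S V ξ p q (fun ω' => ω' ↑i = true) := by
    unfold S
    apply Finset.sum_congr rfl
    intro ω _
    simp only [hμdef, hgdef, mul_ite, mul_one, mul_zero, extendConfig_coe]
  have e3 : ∑ a, μ a = S V ξ p q (fun _ => True) := by
    unfold S
    apply Finset.sum_congr rfl
    intro ω _
    simp only [if_true, hμdef]
  have e4 : ∑ a, μ a * (f a * g a) = S V ξ p q (fun ω => A ω ∧ ω ↑i = true) := by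
    unfold S
    apply Finset.sum_congr rfl
    intro ω _
    simp only [hμdef, hfdef, hgdef, extendConfig_coe]
    by_cases h1 : A (extendConfig (edgeFinset V) ω) <;> by_cases h2 : ω i = true <;>
      simp [h1, h2]
  rw [e1, e2, e3, e4] at hfkg
  exact hfkg

end RC

namespace RC

open Finset

variable (V : Finset Vtx) (ξ : Vtx → Vtx → Prop)

lemma genuine_of_mem {e : Edge} (he : e ∈ edgeFinset V) :
    ∃ u v : Vtx, u ∈ V ∧ v ∈ V ∧ adjV u v ∧ e = s(u, v) := by
  unfold edgeFinset at he
  rcases Finset.mem_image.1 he with ⟨xy, hxy, rfl⟩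
  rcases Finset.mem_filter.1 hxy with ⟨hmem, hadj⟩
  rcases Finset.mem_product.1 hmem with ⟨h1, h2⟩
  exact ⟨xy.1, xy.2, h1, h2, hadj, rfl⟩

lemma ext_update (ω : {e // e ∈ edgeFinset V} → Bool) (i : {e // e ∈ edgeFinset V})
    (h : ω i = false) :
    extendConfig (edgeFinset V) (Function.update ω i true) =
      upd (extendConfig (edgeFinset V) ω) ↑i := by
  classical
  funext f
  simp only [extendConfig, upd]
  by_cases hf : f = ↑i
  · subst hf
    rw [if_pos rfl, dif_pos i.2]
    have : (⟨(i : Edge), i.2⟩ : {e // e ∈ edgeFinset V}) = i := rfl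
    rw [this, Function.update_self]
  · rw [if_neg hf]
    by_cases hfE : f ∈ edgeFinset V
    · rw [dif_pos hfE, dif_pos hfE, Function.update_of_ne]
      intro hc
      exact hf (congrArg Subtype.val hc)
    · rw [dif_neg hfE, dif_neg hfE]

lemma openCount_update (ω : {e // e ∈ edgeFinset V} → Bool) (i : {e // e ∈ edgeFinset V})
    (h : ω i = false) :
    openCount V (Function.update ω i true) = openCount V ω + 1 := by
  classical
  unfold openCount
  have himg : (Finset.univ.filter (fun j => Function.update ω i true j = true)) =
      insert i (Finset.univ.filter (fun j => ω j = true)) := by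
    ext j
    simp only [Finset.mem_filter, Finset.mem_univ, true_and, Finset.mem_insert]
    by_cases hj : j = i
    · subst hj
      simp [Function.update_self]
    · rw [Function.update_of_ne hj]
      simp [hj]
  rw [himg, Finset.card_insert_of_notMem]
  simp [h]

lemma closedCount_update (ω : {e // e ∈ edgeFinset V} → Bool) (i : {e // e ∈ edgeFinset V})
    (h : ω i = false) :
    closedCount V ω = closedCount V (Function.update ω i true) + 1 := by
  classical
  unfold closedCount
  have himg : (Finset.univ.filter (fun j => Function.update ω i true j = false)) =
      (Finset.univ.filter (fun j => ω j = false)).erase i := by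
    ext j
    simp only [Finset.mem_filter, Finset.mem_univ, true_and, Finset.mem_erase]
    by_cases hj : j = i
    · subst hj
      simp [Function.update_self]
    · rw [Function.update_of_ne hj]
      simp [hj]
  have hmem : i ∈ Finset.univ.filter (fun j => ω j = false) := by
    simp [h]
  rw [himg, Finset.card_erase_of_mem hmem]
  have : 1 ≤ (Finset.univ.filter (fun j => ω j = false)).card :=
    Finset.card_pos.2 ⟨i, hmem⟩
  omega

/-- Flip one coordinate. -/
def flipPerm (i : {e // e ∈ edgeFinset V}) :
    ({e // e ∈ edgeFinset V} → Bool) ≃ ({e // e ∈ edgeFinset V} → Bool) := by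
  classical
  exact Function.Involutive.toPerm (fun ω => Function.update ω i (!(ω i))) (by
    intro ω
    funext j
    by_cases hj : j = i
    · subst hj
      simp
    · simp [Function.update_of_ne hj])

lemma S_open_eq {p q : ℝ} (i : {e // e ∈ edgeFinset V}) :
    S V ξ p q (fun ω' => ω' ↑i = true) =
      ∑ ω : {e // e ∈ edgeFinset V} → Bool,
        if ω i = false then rcWeight V ξ p q (Function.update ω i true) else 0 := by
  classical
  unfold S
  trans (∑ ω : {e // e ∈ edgeFinset V} → Bool,
      if ω i = true then rcWeight V ξ p q ω else 0)
  · apply Finset.sum_congr rfl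
    intro ω _
    by_cases h : ω i = true <;> simp [extendConfig_coe, h]
  rw [← Equiv.sum_comp (flipPerm V i)
    (fun ω => if ω i = true then rcWeight V ξ p q ω else 0)]
  apply Finset.sum_congr rfl
  intro ω _
  have hflip : (flipPerm V i) ω = Function.update ω i (!(ω i)) := rfl
  rw [hflip]
  cases h : ω i <;> simp [Function.update_self, h]

lemma S_closed_eq {p q : ℝ} (i : {e // e ∈ edgeFinset V}) :
    S V ξ p q (fun ω' => ω' ↑i = false) =
      ∑ ω : {e // e ∈ edgeFinset V} → Bool,
        if ω i = false then rcWeight V ξ p q ω else 0 := by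
  classical
  unfold S
  apply Finset.sum_congr rfl
  intro ω _
  by_cases h : ω i = false <;> simp [extendConfig_coe, h]

lemma pairing_bounds {p q : ℝ} (hq : 1 ≤ q) (hp0 : 0 < p) (hp1 : p < 1)
    (hξ : Symmetric ξ) (hξV : ∀ x y, ξ x y → x ∈ V ∧ y ∈ V) (i : {e // e ∈ edgeFinset V}) :
    (1 - p) * S V ξ p q (fun ω' => ω' ↑i = true) ≤
        p * S V ξ p q (fun ω' => ω' ↑i = false) ∧
      p * S V ξ p q (fun ω' => ω' ↑i = false) ≤
        q * (1 - p) * S V ξ p q (fun ω' => ω' ↑i = true) := by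
  classical
  have hq0 : (0 : ℝ) < q := lt_of_lt_of_le one_pos hq
  have h1p : (0 : ℝ) < 1 - p := by linarith
  obtain ⟨u, v, hu, hv, hadj, he⟩ := genuine_of_mem V i.2
  -- termwise facts
  have hterm : ∀ ω : {e // e ∈ edgeFinset V} → Bool, ω i = false →
      (1 - p) * rcWeight V ξ p q (Function.update ω i true) ≤ p * rcWeight V ξ p q ω ∧
        p * rcWeight V ξ p q ω ≤ q * (1 - p) * rcWeight V ξ p q (Function.update ω i true) := by
    intro ω h
    set Kc := clusterCount V ξ (extendConfig (edgeFinset V) ω) with hKc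
    set Ko := clusterCount V ξ (extendConfig (edgeFinset V) (Function.update ω i true)) with hKo
    have hKrel : Ko ≤ Kc ∧ Kc ≤ Ko + 1 := by
      rw [hKo, hKc, ext_update V ω i h]
      have h2 := K_upd_le (χ := extendConfig (edgeFinset V) ω) hξ hξV hu hv hadj
      rw [← he] at h2
      exact h2
    have hkey : (1 - p) * q ^ Kc * rcWeight V ξ p q (Function.update ω i true) =
        p * q ^ Ko * rcWeight V ξ p q ω := by
      rw [rcWeight_eq, rcWeight_eq, ← hKc, ← hKo, openCount_update V ω i h,
        closedCount_update V ω i h]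
      rw [pow_succ, pow_succ]
      ring
    have hwo : (0 : ℝ) < rcWeight V ξ p q (Function.update ω i true) :=
      weight_pos V ξ hp0 hp1 hq0 _
    have hwc : (0 : ℝ) < rcWeight V ξ p q ω := weight_pos V ξ hp0 hp1 hq0 _
    have hqKo : (0 : ℝ) < q ^ Ko := pow_pos hq0 _
    constructor
    · rw [← mul_le_mul_iff_left₀ hqKo]
      calc (1 - p) * rcWeight V ξ p q (Function.update ω i true) * q ^ Ko
          ≤ (1 - p) * rcWeight V ξ p q (Function.update ω i true) * q ^ Kc := by
            apply mul_le_mul_of_nonneg_left (pow_le_pow_right₀ hq hKrel.1)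
            positivity
        _ = p * rcWeight V ξ p q ω * q ^ Ko := by
            linear_combination hkey
    · rw [← mul_le_mul_iff_left₀ hqKo]
      calc p * rcWeight V ξ p q ω * q ^ Ko
          = (1 - p) * rcWeight V ξ p q (Function.update ω i true) * q ^ Kc := by
            linear_combination -hkey
        _ ≤ (1 - p) * rcWeight V ξ p q (Function.update ω i true) * q ^ (Ko + 1) := by
            apply mul_le_mul_of_nonneg_left (pow_le_pow_right₀ hq hKrel.2)
            positivity
        _ = q * (1 - p) * rcWeight V ξ p q (Function.update ω i true) * q ^ Ko := by
            rw [pow_succ]; ring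
  rw [S_open_eq V ξ i, S_closed_eq V ξ i, Finset.mul_sum, Finset.mul_sum, Finset.mul_sum]
  constructor
  · apply Finset.sum_le_sum
    intro ω _
    by_cases h : ω i = false
    · rw [if_pos h, if_pos h]
      exact (hterm ω h).1
    · rw [if_neg h, if_neg h, mul_zero, mul_zero]
  · apply Finset.sum_le_sum
    intro ω _
    by_cases h : ω i = false
    · rw [if_pos h, if_pos h]
      exact (hterm ω h).2
    · rw [if_neg h, if_neg h, mul_zero, mul_zero]

end RC

namespace RC

open Finset

lemma S_congr (V : Finset Vtx) (ξ : Vtx → Vtx → Prop) (p q : ℝ)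
    (P Q : (Edge → Bool) → Prop)
    (h : ∀ ω : {e // e ∈ edgeFinset V} → Bool,
      P (extendConfig (edgeFinset V) ω) ↔ Q (extendConfig (edgeFinset V) ω)) :
    S V ξ p q P = S V ξ p q Q := by
  classical
  unfold S
  apply Finset.sum_congr rfl
  intro ω _
  by_cases hP : P (extendConfig (edgeFinset V) ω)
  · rw [if_pos hP, if_pos ((h ω).1 hP)]
  · rw [if_neg hP, if_neg (fun hQ => hP ((h ω).2 hQ))]

lemma S_open_add_closed (V : Finset Vtx) (ξ : Vtx → Vtx → Prop) (p q : ℝ) (e : Edge) :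
    S V ξ p q (fun ω' => ω' e = true) + S V ξ p q (fun ω' => ω' e = false) =
      S V ξ p q (fun _ => True) := by
  classical
  unfold S
  rw [← Finset.sum_add_distrib]
  apply Finset.sum_congr rfl
  intro ω _
  cases h : extendConfig (edgeFinset V) ω e <;> simp [h]


lemma influence_formula (SAo SAc So Sc : ℝ) (hSo : So ≠ 0) (hSc : Sc ≠ 0)
    (hZ : So + Sc ≠ 0) :
    SAo / (So + Sc) / (So / (So + Sc)) - SAc / (So + Sc) / (Sc / (So + Sc)) =
      (SAo * (So + Sc) - (SAo + SAc) * So) / (So * Sc) := by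
  field_simp
  ring

lemma rc_core (q ε p SAo N So Sc Z I : ℝ) (hq : 1 ≤ q) (hε : 0 < ε)
    (hεp : ε ≤ p) (hp1ε : p ≤ 1 - ε)
    (hSo : 0 < So) (hSc : 0 < Sc) (hZ : 0 < Z) (hZsum : So + Sc = Z)
    (hcov : N * So ≤ Z * SAo)
    (h1 : (1 - p) * So ≤ p * Sc) (h2 : p * Sc ≤ q * (1 - p) * So)
    (hinf : I = (SAo * Z - N * So) / (So * Sc)) :
    ε ^ 2 / (1 + q) * I ≤ (SAo * Z - N * So) / (p * (1 - p) * Z ^ 2) ∧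
      (SAo * Z - N * So) / (p * (1 - p) * Z ^ 2) ≤ (ε ^ 2 / (1 + q))⁻¹ * I := by
  subst hZsum
  have hq0 : (0 : ℝ) < q := lt_of_lt_of_le one_pos hq
  have hp0 : 0 < p := lt_of_lt_of_le hε hεp
  have hp1 : p < 1 := by linarith
  have h1p : (0 : ℝ) < 1 - p := by linarith
  have hε2 : ε ≤ 1 / 2 := by linarith
  have h1q : (0 : ℝ) < 1 + q := by linarith
  have hqp : 0 ≤ q * p := mul_nonneg hq0.le hp0.le
  have hεsq : ε ^ 2 ≤ ε := by
    have : ε * ε ≤ ε * 1 := mul_le_mul_of_nonneg_left (by linarith) hε.le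
    calc ε ^ 2 = ε * ε := sq ε
      _ ≤ ε * 1 := this
      _ = ε := mul_one ε
  set c0 := ε ^ 2 / (1 + q) with hc0def
  have hc0 : 0 < c0 := by rw [hc0def]; positivity
  have hNe : 0 ≤ SAo * (So + Sc) - N * So := by linarith [hcov]
  have hX : 0 < p * (1 - p) * (So + Sc) ^ 2 := by positivity
  have a1 : So ≤ p * (So + Sc) := by linarith [h1]
  have a2 : (1 - p) * (So + Sc) ≤ Sc := by linarith [h1]
  have a3 : p * (So + Sc) ≤ (p + q * (1 - p)) * So := by linarith [h2]
  have aSc : Sc ≤ So + Sc := by linarith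
  have hq1p : 0 < q * (1 - p) := mul_pos hq0 h1p
  have hpq0 : (0 : ℝ) < p + q * (1 - p) := by linarith
  have hlow : c0 * (p * (1 - p) * (So + Sc) ^ 2) ≤ So * Sc := by
    have hB : (p * (So + Sc)) * ((1 - p) * (So + Sc)) ≤ ((p + q * (1 - p)) * So) * Sc :=
      mul_le_mul a3 a2 (by positivity) (by positivity)
    have hC : p + q * (1 - p) ≤ 1 + q := by linarith
    have hC2 : (p + q * (1 - p)) * (So * Sc) ≤ (1 + q) * (So * Sc) :=
      mul_le_mul_of_nonneg_right hC (by positivity)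
    have hc1 : c0 * (1 + q) ≤ 1 := by
      rw [hc0def, div_mul_cancel₀ _ h1q.ne']
      linarith [hεsq, hε2]
    calc c0 * (p * (1 - p) * (So + Sc) ^ 2)
        = c0 * ((p * (So + Sc)) * ((1 - p) * (So + Sc))) := by ring
      _ ≤ c0 * (((p + q * (1 - p)) * So) * Sc) := mul_le_mul_of_nonneg_left hB hc0.le
      _ ≤ c0 * ((1 + q) * (So * Sc)) := by
          refine mul_le_mul_of_nonneg_left ?_ hc0.le
          linarith [hC2]
      _ = (c0 * (1 + q)) * (So * Sc) := by ring
      _ ≤ 1 * (So * Sc) := mul_le_mul_of_nonneg_right hc1 (by positivity)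
      _ = So * Sc := one_mul _
  have hup : So * Sc ≤ c0⁻¹ * (p * (1 - p) * (So + Sc) ^ 2) := by
    have b1 : So * Sc ≤ (p * (So + Sc)) * (So + Sc) := mul_le_mul a1 aSc hSc.le (by positivity)
    have hc0inv : c0⁻¹ = (1 + q) / ε ^ 2 := by rw [hc0def, inv_div]
    have b2 : (1 : ℝ) ≤ c0⁻¹ * (1 - p) := by
      rw [hc0inv, div_mul_eq_mul_div, le_div_iff₀ (by positivity)]
      have hεle : 1 * (1 - p) ≤ (1 + q) * (1 - p) :=
        mul_le_mul_of_nonneg_right (by linarith) h1p.le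
      rw [one_mul] at hεle
      linarith [hεsq]
    calc So * Sc ≤ (p * (So + Sc)) * (So + Sc) := b1
      _ = 1 * (p * (So + Sc) ^ 2) := by ring
      _ ≤ (c0⁻¹ * (1 - p)) * (p * (So + Sc) ^ 2) :=
          mul_le_mul_of_nonneg_right b2 (by positivity)
      _ = c0⁻¹ * (p * (1 - p) * (So + Sc) ^ 2) := by ring
  constructor
  · rw [hinf, mul_div_assoc']
    rw [div_le_div_iff₀ (by positivity) hX]
    have := mul_le_mul_of_nonneg_left hlow hNe
    linarith [this]
  · rw [hinf, mul_div_assoc']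
    rw [div_le_div_iff₀ hX (by positivity)]
    have := mul_le_mul_of_nonneg_left hup hNe
    linarith [this]

lemma rc_aux (q ε : ℝ) (hq : 1 ≤ q) (hε : 0 < ε)
    (V : Finset Vtx) (ξ : Vtx → Vtx → Prop) (hξs : Symmetric ξ)
    (hξV : ∀ x y : Vtx, ξ x y → x ∈ V ∧ y ∈ V)
    (A : (Edge → Bool) → Prop) (hA : IncreasingEvent A)
    (p : ℝ) (hεp : ε ≤ p) (hp1ε : p ≤ 1 - ε) (e : Edge) (he : e ∈ edgeFinset V) :
    ε ^ 2 / (1 + q) * influence V ξ p q A e ≤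
        (S V ξ p q (fun ω => A ω ∧ ω e = true) * S V ξ p q (fun _ => True) -
            S V ξ p q A * S V ξ p q (fun ω' => ω' e = true)) /
          (p * (1 - p) * S V ξ p q (fun _ => True) ^ 2) ∧
      (S V ξ p q (fun ω => A ω ∧ ω e = true) * S V ξ p q (fun _ => True) -
            S V ξ p q A * S V ξ p q (fun ω' => ω' e = true)) /
          (p * (1 - p) * S V ξ p q (fun _ => True) ^ 2) ≤
        (ε ^ 2 / (1 + q))⁻¹ * influence V ξ p q A e := by
  classical
  have hq0 : (0 : ℝ) < q := lt_of_lt_of_le one_pos hq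
  have hp0 : 0 < p := lt_of_lt_of_le hε hεp
  have hp1 : p < 1 := by linarith
  have hSo : 0 < S V ξ p q (fun ω' => ω' e = true) := S_open_pos V ξ hp0 hp1 hq0 he
  have hSc : 0 < S V ξ p q (fun ω' => ω' e = false) := S_closed_pos V ξ hp0 hp1 hq0 he
  have hZ : 0 < S V ξ p q (fun _ => True) := S_top_pos V ξ hp0 hp1 hq0
  have hZsum : S V ξ p q (fun ω' => ω' e = true) + S V ξ p q (fun ω' => ω' e = false) =
      S V ξ p q (fun _ => True) := S_open_add_closed V ξ p q e
  have hNsum : S V ξ p q (fun ω => A ω ∧ ω e = true) +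
      S V ξ p q (fun ω => A ω ∧ ω e = false) = S V ξ p q A := S_split V ξ p q A e
  have hcov : S V ξ p q A * S V ξ p q (fun ω' => ω' e = true) ≤
      S V ξ p q (fun _ => True) * S V ξ p q (fun ω => A ω ∧ ω e = true) :=
    Ne_nonneg V ξ hq hp0 hp1 hξs hξV A hA ⟨e, he⟩
  have hpair := pairing_bounds V ξ hq hp0 hp1 hξs hξV ⟨e, he⟩
  have h1 : (1 - p) * S V ξ p q (fun ω' => ω' e = true) ≤
      p * S V ξ p q (fun ω' => ω' e = false) := hpair.1
  have h2 : p * S V ξ p q (fun ω' => ω' e = false) ≤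
      q * (1 - p) * S V ξ p q (fun ω' => ω' e = true) := hpair.2
  have hinf : influence V ξ p q A e =
      (S V ξ p q (fun ω => A ω ∧ ω e = true) * S V ξ p q (fun _ => True) -
          S V ξ p q A * S V ξ p q (fun ω' => ω' e = true)) /
        (S V ξ p q (fun ω' => ω' e = true) * S V ξ p q (fun ω' => ω' e = false)) := by
    unfold influence
    rw [rcProb_eq, rcProb_eq, rcProb_eq, rcProb_eq, ← hZsum, ← hNsum]
    exact influence_formula _ _ _ _ (ne_of_gt hSo) (ne_of_gt hSc)
      (by rw [hZsum]; exact ne_of_gt hZ)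
  exact rc_core q ε p _ _ _ _ _ _ hq hε hεp hp1ε hSo hSc hZ hZsum hcov h1 h2 hinf

end RC

theorem rc_russo_influence_formula' (q ε : ℝ) (hq : 1 ≤ q) (hε : 0 < ε) :
    ∃ c : ℝ, 0 < c ∧
      ∀ (V : Finset Vtx) (ξ : Vtx → Vtx → Prop), IsBoundaryCondition V ξ →
        ∀ A : (Edge → Bool) → Prop, IncreasingEvent A →
          ∀ p : ℝ, ε ≤ p → p ≤ 1 - ε →
            ∃ D : ℝ, HasDerivAt (fun x : ℝ => rcProb V ξ x q A) D p ∧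
              c * (∑ e ∈ edgeFinset V, influence V ξ p q A e) ≤ D ∧
              D ≤ c⁻¹ * (∑ e ∈ edgeFinset V, influence V ξ p q A e) := by
  classical
  have hq0 : (0 : ℝ) < q := lt_of_lt_of_le one_pos hq
  refine ⟨ε ^ 2 / (1 + q), by positivity, ?_⟩
  intro V ξ hbc A hA p hεp hp1ε
  obtain ⟨hξs, hξt, hξb⟩ := hbc
  have hξV : ∀ x y, ξ x y → x ∈ V ∧ y ∈ V :=
    fun x y h => ⟨(hξb x y h).1.1, (hξb x y h).2.1⟩
  have hp0 : 0 < p := lt_of_lt_of_le hε hεp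
  have hp1 : p < 1 := by linarith
  have hp0' : p ≠ 0 := ne_of_gt hp0
  have h1p : (0 : ℝ) < 1 - p := by linarith
  have h1p' : (1 : ℝ) - p ≠ 0 := ne_of_gt h1p
  have hZpos : 0 < RC.S V ξ p q (fun _ => True) := RC.S_top_pos V ξ hp0 hp1 hq0
  -- the derivative
  have hDN := RC.hasDerivAt_S V ξ q hp0' h1p' A
  have hDZ := RC.hasDerivAt_S V ξ q hp0' h1p' (fun _ => True)
  have hquot := hDN.div hDZ (ne_of_gt hZpos)
  have hfun : (fun x : ℝ => rcProb V ξ x q A) =ᶠ[nhds p]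
      fun x => RC.S V ξ x q A / RC.S V ξ x q (fun _ => True) :=
    Filter.Eventually.of_forall (fun x => RC.rcProb_eq V ξ x q A)
  have hderiv := hquot.congr_of_eventuallyEq hfun
  -- rewrite the derivative value as a sum over edges
  have hD_eq : ((RC.SO V ξ p q A - ((edgeFinset V).card : ℝ) * p * RC.S V ξ p q A) /
          (p * (1 - p)) * RC.S V ξ p q (fun _ => True) -
        RC.S V ξ p q A *
          ((RC.SO V ξ p q (fun _ => True) -
              ((edgeFinset V).card : ℝ) * p * RC.S V ξ p q (fun _ => True)) /
            (p * (1 - p)))) /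
        RC.S V ξ p q (fun _ => True) ^ 2 =
      ∑ e ∈ edgeFinset V,
        (RC.S V ξ p q (fun ω => A ω ∧ ω e = true) * RC.S V ξ p q (fun _ => True) -
            RC.S V ξ p q A * RC.S V ξ p q (fun ω' => ω' e = true)) /
          (p * (1 - p) * RC.S V ξ p q (fun _ => True) ^ 2) := by
    rw [RC.SO_eq V ξ p q A, RC.SO_eq V ξ p q (fun _ => True)]
    have htop : ∀ e ∈ edgeFinset V,
        RC.S V ξ p q (fun ω => True ∧ ω e = true) =
          RC.S V ξ p q (fun ω' => ω' e = true) := by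
      intro e _
      apply RC.S_congr
      intro ω
      simp
    rw [Finset.sum_congr rfl htop]
    rw [← Finset.sum_div, Finset.sum_sub_distrib, ← Finset.sum_mul, ← Finset.mul_sum]
    field_simp
    ring
  refine ⟨_, hderiv, ?_, ?_⟩
  · rw [hD_eq, Finset.mul_sum]
    apply Finset.sum_le_sum
    intro e he
    exact (RC.rc_aux q ε hq hε V ξ hξs hξV A hA p hεp hp1ε e he).1
  · rw [hD_eq, Finset.mul_sum]
    apply Finset.sum_le_sum
    intro e he
    exact (RC.rc_aux q ε hq hε V ξ hξs hξV A hA p hεp hp1ε e he).2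

/-- **Generalized Russo formula (Proposition 3.5).**  Let `q ≥ 1` and `ε > 0`.  For any
random-cluster measure `φ^ξ_{G,p,q}` with `p ∈ [ε, 1-ε]` and any increasing event `A`,
`(d/dp) φ^ξ_{G,p,q}(A) ≍ ∑_{e ∈ E} I_A^p(e)`, the constants depending only on `q` and
`ε`. -/
theorem rc_russo_influence_formula (q ε : ℝ) (hq : 1 ≤ q) (hε : 0 < ε) :
    ∃ c : ℝ, 0 < c ∧
      ∀ (V : Finset Vtx) (ξ : Vtx → Vtx → Prop), IsBoundaryCondition V ξ →
        ∀ A : (Edge → Bool) → Prop, IncreasingEvent A →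
          ∀ p : ℝ, ε ≤ p → p ≤ 1 - ε →
            ∃ D : ℝ, HasDerivAt (fun x : ℝ => rcProb V ξ x q A) D p ∧
              c * (∑ e ∈ edgeFinset V, influence V ξ p q A e) ≤ D ∧
              D ≤ c⁻¹ * (∑ e ∈ edgeFinset V, influence V ξ p q A e) := by
  exact rc_russo_influence_formula' q ε hq hε
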